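/- arXiv:2203.03172 — 4 statements merged into one kernel-verified Lean document; each statement's English description precedes it below -/
import Mathlib

section
/- Let g : ℝ³ → ℝ³ be g(l) = k·max(‖l‖-L,0)·l/‖l‖ with k, L > 0 and let l : ℝ → ℝ³ be differentiable with ‖l(t)‖ > L. If (d/dt) g(l(t)) = 0 for all t and ‖l(t)‖ ≠ L, then l̇(t) = 0. -/
open scoped RealInnerProductSpace

/-- If the taut elastic cable force `g(l) = k·max(‖l‖-L,0)·l/‖l‖` is constant
(`(d/dt) g(l(t)) = 0`) along a differentiable cable trajectory staying taut
(`‖l(t)‖ > L`), then the cable vector derivative vanishes: `l̇(t) = 0`. -/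
theorem stmt11 (k L : ℝ) (hk : 0 < k) (hL : 0 < L)
    (g : EuclideanSpace ℝ (Fin 3) → EuclideanSpace ℝ (Fin 3))
    (hg : g = fun l => (k * max (‖l‖ - L) 0 / ‖l‖) • l)
    (l : ℝ → EuclideanSpace ℝ (Fin 3)) (l' : EuclideanSpace ℝ (Fin 3)) (t : ℝ)
    (htaut : ∀ s, L < ‖l s‖)
    (hl : HasDerivAt l l' t)
    (hconst : HasDerivAt (fun s => g (l s)) 0 t) :
    l' = 0 := by
  have hnpos : ∀ s, (0:ℝ) < ‖l s‖ := fun s => hL.trans (htaut s)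
  set n : ℝ := ‖l t‖ with hn
  have hn0 : n ≠ 0 := (hnpos t).ne'
  set a : ℝ := ⟪l t, l'⟫ with ha
  -- derivative of the squared norm
  have hsq : HasDerivAt (fun s => ⟪l s, l s⟫) (2 * a) t := by
    convert hl.inner ℝ hl using 1
    · rfl
    · rfl
    rw [ha, real_inner_comm]; ring
  -- derivative of the norm
  have hN : HasDerivAt (fun s => ‖l s‖) (a / n) t := by
    have hinner0 : ⟪l t, l t⟫ ≠ 0 := by
      rw [real_inner_self_eq_norm_sq]
      positivity
    have := hsq.sqrt hinner0
    have heq : (fun s => Real.sqrt ⟪l s, l s⟫) = fun s => ‖l s‖ := by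
      funext s
      rw [real_inner_self_eq_norm_sq, Real.sqrt_sq (norm_nonneg _)]
    rw [heq] at this
    have hs : Real.sqrt ⟪l t, l t⟫ = n := by
      rw [real_inner_self_eq_norm_sq, Real.sqrt_sq (norm_nonneg _)]
    rw [hs] at this
    convert this using 1
    field_simp
  -- derivative of the scalar coefficient
  have hc : HasDerivAt (fun s => k * (‖l s‖ - L) / ‖l s‖)
      ((k * (a / n) * n - k * (n - L) * (a / n)) / n ^ 2) t := by
    exact (((hN.sub_const L).const_mul k).div hN hn0)
  -- derivative of g ∘ l
  have hcomp : HasDerivAt (fun s => g (l s))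
      ((k * (n - L) / n) • l'
        + ((k * (a / n) * n - k * (n - L) * (a / n)) / n ^ 2) • l t) t := by
    have hmax : ∀ s, max (‖l s‖ - L) 0 = ‖l s‖ - L := fun s =>
      max_eq_left (by linarith [htaut s])
    have : (fun s => g (l s)) = fun s => (k * (‖l s‖ - L) / ‖l s‖) • l s := by
      funext s; rw [hg]; simp [hmax s]
    rw [this]
    exact hc.smul hl
  have huniq := hconst.unique hcomp
  -- simplify the scalar coefficients
  have hc' : (k * (a / n) * n - k * (n - L) * (a / n)) / n ^ 2 = k * L * a / n ^ 3 := by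
    field_simp
    ring
  rw [hc'] at huniq
  rw [show k * (‖l t‖ - L) / ‖l t‖ = k * (n - L) / n from rfl] at huniq
  -- take inner product with l t
  have hinn : ⟪l t, (k * (n - L) / n) • l' + (k * L * a / n ^ 3) • l t⟫ = 0 := by
    rw [← huniq]; simp
  rw [inner_add_right, real_inner_smul_right, real_inner_smul_right,
    real_inner_self_eq_norm_sq, ← ha, ← hn] at hinn
  have ha0 : a = 0 := by
    have h1 : k * (n - L) / n * a + k * L * a / n ^ 3 * n ^ 2 = k * a := by
      field_simp; ring
    rw [h1] at hinn
    exact (mul_eq_zero.mp hinn).resolve_left hk.ne'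
  rw [ha0] at huniq
  simp only [mul_zero, zero_mul, zero_div, zero_smul, add_zero] at huniq
  have hcoef : k * (n - L) / n ≠ 0 := by
    have : 0 < n - L := by linarith [htaut t]
    positivity
  rcases smul_eq_zero.mp huniq.symm with h | h
  · exact absurd h hcoef
  · exact h
end

section
/- Let γ ∈ ℝ³ with γ^T e₃ = 0, γ ≠ 0. Define V₂(l) = ∫_{l₀}^{‖l‖} k max(τ-L,0) dτ - l^T γ + C with k, L > 0 and suitable constants l₀, C. Then V₂ attains its global minimum at the unique point l* = γ(1/k + L/‖γ‖), where the cable force k(‖l*‖-L) l*/‖l*‖ equals γ. -/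
open MeasureTheory intervalIntegral

lemma maxsq_deriv_at_corner (k L : ℝ) :
    HasDerivAt (fun t => k / 2 * max (t - L) 0 ^ 2) 0 L := by
  rw [hasDerivAt_iff_tendsto_slope]
  have hbound : ∀ y : ℝ,
      ‖slope (fun t => k / 2 * max (t - L) 0 ^ 2) L y‖ ≤ |k| / 2 * |y - L| := by
    intro y
    rw [slope_def_field]
    rcases eq_or_ne y L with rfl | hy
    · simp
    · have hb : max (y - L) 0 ^ 2 ≤ (y - L) ^ 2 := by
        rcases le_or_gt y L with h' | h'
        · rw [max_eq_right (by linarith)]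
          simpa using sq_nonneg (y - L)
        · rw [max_eq_left (by linarith)]
      have hyx : (0:ℝ) < |y - L| := by
        rw [abs_pos, sub_ne_zero]; exact hy
      have hxx : max (L - L) 0 = 0 := by simp
      rw [hxx]
      have heq : |(k / 2 * max (y - L) 0 ^ 2 - k / 2 * 0 ^ 2) / (y - L)| =
          |k| / 2 * (max (y - L) 0 ^ 2 / |y - L|) := by
        rw [show k / 2 * max (y - L) 0 ^ 2 - k / 2 * 0 ^ 2 = k / 2 * max (y - L) 0 ^ 2 by ring,
          abs_div, abs_mul, abs_div]
        rw [abs_of_nonneg (by positivity : (0:ℝ) ≤ max (y - L) 0 ^ 2)]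
        simp [mul_div_assoc]
      rw [Real.norm_eq_abs, heq]
      have h2 : max (y - L) 0 ^ 2 / |y - L| ≤ |y - L| := by
        rw [div_le_iff₀ hyx]
        calc max (y - L) 0 ^ 2 ≤ (y - L) ^ 2 := hb
          _ = |y - L| * |y - L| := by rw [← sq_abs (y - L), sq]
      exact mul_le_mul_of_nonneg_left h2 (by positivity)
  have ht : Filter.Tendsto (fun y : ℝ => |k| / 2 * |y - L|) (nhdsWithin L {L}ᶜ) (nhds 0) := by
    have hc : Continuous fun y : ℝ => |k| / 2 * |y - L| := by fun_prop
    have := hc.tendsto L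
    simp only [sub_self, abs_zero, mul_zero] at this
    exact this.mono_left nhdsWithin_le_nhds
  exact squeeze_zero_norm hbound ht

lemma maxsq_hasDerivAt (k L x : ℝ) :
    HasDerivAt (fun x => k / 2 * max (x - L) 0 ^ 2) (k * max (x - L) 0) x := by
  rcases lt_trichotomy x L with h | h | h
  · have hev : (fun x => k / 2 * max (x - L) 0 ^ 2) =ᶠ[nhds x] fun _ => (0 : ℝ) := by
      filter_upwards [eventually_lt_nhds h] with y hy
      rw [max_eq_right (by linarith)]
      ring
    have h0 : HasDerivAt (fun _ : ℝ => (0 : ℝ)) 0 x := hasDerivAt_const x 0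
    have := h0.congr_of_eventuallyEq hev
    rw [max_eq_right (by linarith : x - L ≤ 0), mul_zero]
    exact this
  · rw [h]
    have := maxsq_deriv_at_corner k L
    convert this using 1
    simp
  · have hev : (fun x => k / 2 * max (x - L) 0 ^ 2) =ᶠ[nhds x]
        fun y => k / 2 * (y - L) ^ 2 := by
      filter_upwards [eventually_gt_nhds h] with y hy
      rw [max_eq_left (by linarith)]
    have hd : HasDerivAt (fun y : ℝ => k / 2 * (y - L) ^ 2) (k / 2 * (2 * (x - L) ^ 1 * 1)) x :=
      (((hasDerivAt_id x).sub_const L).pow 2).const_mul (k / 2)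
    have := hd.congr_of_eventuallyEq hev
    rw [max_eq_left (by linarith : 0 ≤ x - L)]
    exact this.congr_deriv (by ring)

/-- `V₂(l) = ∫_{l₀}^{‖l‖} k·max(τ-L,0) dτ - lᵀγ + C` attains its global minimum
at the unique point `l* = γ(1/k + L/‖γ‖)`, where the elastic cable force
`k(‖l*‖-L)·l*/‖l*‖` equals `γ`. -/
theorem stmt13 (k L : ℝ) (hk : 0 < k) (hL : 0 < L)
    (γ : EuclideanSpace ℝ (Fin 3)) (hγ : γ ≠ 0) (hγz : γ 2 = 0)
    (l₀ C : ℝ)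
    (V₂ : EuclideanSpace ℝ (Fin 3) → ℝ)
    (hV₂ : V₂ = fun l => (∫ τ in l₀..‖l‖, k * max (τ - L) 0) - (inner ℝ l γ : ℝ) + C)
    (lstar : EuclideanSpace ℝ (Fin 3)) (hlstar : lstar = (1 / k + L / ‖γ‖) • γ) :
    (k * (‖lstar‖ - L) / ‖lstar‖) • lstar = γ ∧
    ∀ l : EuclideanSpace ℝ (Fin 3), l ≠ lstar → V₂ lstar < V₂ l := by
  have ha : (0:ℝ) < ‖γ‖ := norm_pos_iff.mpr hγ
  set a : ℝ := ‖γ‖ with ha_def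
  have hc : (0:ℝ) < 1 / k + L / a := by positivity
  have hnl : ‖lstar‖ = a / k + L := by
    rw [hlstar, norm_smul, Real.norm_eq_abs, abs_of_pos hc, ← ha_def]
    field_simp
  have hlpos : (0:ℝ) < ‖lstar‖ := by rw [hnl]; positivity
  constructor
  · rw [hnl, hlstar, smul_smul]
    have hs : k * (a / k + L - L) / (a / k + L) * (1 / k + L / a) = 1 := by
      field_simp
      ring
    rw [hs, one_smul]
  · intro l hl
    have hint : ∀ r : ℝ, (∫ τ in l₀..r, k * max (τ - L) 0) =
        k / 2 * max (r - L) 0 ^ 2 - k / 2 * max (l₀ - L) 0 ^ 2 := by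
      intro r
      exact integral_eq_sub_of_hasDerivAt (fun τ _ => maxsq_hasDerivAt k L τ)
        (Continuous.intervalIntegrable (by fun_prop) _ _)
    have hVl : ∀ m : EuclideanSpace ℝ (Fin 3), V₂ m =
        k / 2 * max (‖m‖ - L) 0 ^ 2 - k / 2 * max (l₀ - L) 0 ^ 2 - (inner ℝ m γ : ℝ) + C := by
      intro m
      rw [hV₂]
      simp only
      rw [hint]
    have hinls : (inner ℝ lstar γ : ℝ) = (1 / k + L / a) * a ^ 2 := by
      rw [hlstar, real_inner_smul_left, real_inner_self_eq_norm_sq]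
    have hms : max (‖lstar‖ - L) 0 = a / k := by
      rw [hnl, show a / k + L - L = a / k by ring, max_eq_left (div_pos ha hk).le]
    rw [hVl l, hVl lstar, hinls, hms]
    have hCS : (inner ℝ l γ : ℝ) ≤ ‖l‖ * a := real_inner_le_norm l γ
    set r : ℝ := ‖l‖ with hr_def
    have hr : 0 ≤ r := norm_nonneg l
    -- key algebraic facts
    have key_le : k / 2 * (a / k) ^ 2 - (1 / k + L / a) * a ^ 2 ≤
        k / 2 * max (r - L) 0 ^ 2 - r * a := by
      rcases le_or_gt r L with hrL | hrL
      · rw [max_eq_right (by linarith)]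
        have h1 : k / 2 * (a / k) ^ 2 - (1 / k + L / a) * a ^ 2 = -(a ^ 2 / (2 * k)) - L * a := by
          field_simp
          ring
        rw [h1]
        have h2 : (0:ℝ) < a ^ 2 / (2 * k) := by positivity
        have h3 : r * a ≤ L * a := mul_le_mul_of_nonneg_right hrL ha.le
        have h4 : k / 2 * (0:ℝ) ^ 2 = 0 := by norm_num
        linarith
      · rw [max_eq_left (by linarith)]
        have h1 : k / 2 * (r - L) ^ 2 - r * a -
            (k / 2 * (a / k) ^ 2 - (1 / k + L / a) * a ^ 2) =
            (k * (r - L) - a) ^ 2 / (2 * k) := by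
          field_simp
          ring
        have h2 : (0:ℝ) ≤ (k * (r - L) - a) ^ 2 / (2 * k) :=
          div_nonneg (sq_nonneg _) (by positivity)
        linarith
    rcases lt_or_eq_of_le hCS with hlt | heq
    · linarith
    · -- equality in Cauchy–Schwarz: l is a nonnegative multiple of γ
      have hdir : a • l = r • γ := (inner_eq_norm_mul_iff_real).mp heq
      have hrne : r ≠ a / k + L := by
        intro hcon
        apply hl
        have : l = (r / a) • γ := by
          have := congrArg (fun v => (a⁻¹ : ℝ) • v) hdir
          simpa [smul_smul, inv_mul_cancel₀ (ne_of_gt ha), div_eq_inv_mul, mul_comm] using this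
        rw [this, hlstar, hcon]
        congr 1
        field_simp
      have key_lt : k / 2 * (a / k) ^ 2 - (1 / k + L / a) * a ^ 2 <
          k / 2 * max (r - L) 0 ^ 2 - r * a := by
        rcases le_or_gt r L with hrL | hrL
        · rw [max_eq_right (by linarith)]
          have h1 : k / 2 * (a / k) ^ 2 - (1 / k + L / a) * a ^ 2 = -(a ^ 2 / (2 * k)) - L * a := by
            field_simp
            ring
          rw [h1]
          have h2 : (0:ℝ) < a ^ 2 / (2 * k) := by positivity
          have h3 : r * a ≤ L * a := mul_le_mul_of_nonneg_right hrL ha.le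
          have h4 : k / 2 * (0:ℝ) ^ 2 = 0 := by norm_num
          linarith
        · rw [max_eq_left (by linarith)]
          have h1 : k / 2 * (r - L) ^ 2 - r * a -
              (k / 2 * (a / k) ^ 2 - (1 / k + L / a) * a ^ 2) =
              (k * (r - L) - a) ^ 2 / (2 * k) := by
            field_simp
            ring
          have hne : k * (r - L) - a ≠ 0 := by
            intro hcon
            apply hrne
            field_simp at hcon ⊢
            linarith
          have hpos : (0:ℝ) < (k * (r - L) - a) ^ 2 / (2 * k) :=
            div_pos (lt_of_le_of_ne (sq_nonneg _) (Ne.symm (pow_ne_zero 2 hne))) (by positivity)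
          linarith
      rw [← heq] at key_lt
      linarith
end

section
/- Suppose trajectories p_H, p_R : ℝ → ℝ³ satisfy ẍ_H = ẍ_R = 0 identically and the force balance 0 = -B_H ṗ_H + f_c, 0 = B_A(ṗ_H - ṗ_R) - f_c + γ, together with ḟ_c = 0, where f_c is the taut unilateral cable force of p_R - p_H. Then ṗ_H = ṗ_R = B_H^{-1}γ and f_c = γ. -/
open Matrix

private lemma const_of_deriv_zero' {f : ℝ → Fin 3 → ℝ} (h : ∀ t, HasDerivAt f 0 t) (t : ℝ) :
    f t = f 0 :=
  is_const_of_deriv_eq_zero (fun x => (h x).differentiableAt) (fun x => (h x).deriv) t 0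

/-- Equilibrium characterization for the human-velocity-feedback controller
under saturated constant input: if accelerations vanish identically, the force
balances `0 = -B_H ṗ_H + f_c` and `0 = B_A(ṗ_H - ṗ_R) - f_c + γ` hold, the
cable stays taut, and `ḟ_c = 0`, then `ṗ_H = ṗ_R = B_H⁻¹γ` and `f_c = γ`. -/
theorem stmt15 (k L : ℝ) (hk : 0 < k) (hL : 0 < L)
    (BH BA : Matrix (Fin 3) (Fin 3) ℝ)
    (hBHs : BH.IsSymm) (hBAs : BA.IsSymm) (hBH : BH.PosDef) (hBA : BA.PosDef)
    (γ : Fin 3 → ℝ) (hγz : γ 2 = 0)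
    (pH pR vH vR fc : ℝ → Fin 3 → ℝ)
    (hfc : ∀ t, fc t =
      (k * (Real.sqrt ((pR t - pH t) ⬝ᵥ (pR t - pH t)) - L) /
        Real.sqrt ((pR t - pH t) ⬝ᵥ (pR t - pH t))) • (pR t - pH t))
    (htaut : ∀ t, L < Real.sqrt ((pR t - pH t) ⬝ᵥ (pR t - pH t)))
    (hpH : ∀ t, HasDerivAt pH (vH t) t)
    (hpR : ∀ t, HasDerivAt pR (vR t) t)
    (haccH : ∀ t, HasDerivAt vH 0 t)
    (haccR : ∀ t, HasDerivAt vR 0 t)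
    (hbalH : ∀ t, 0 = -(BH *ᵥ vH t) + fc t)
    (hbalR : ∀ t, 0 = BA *ᵥ (vH t - vR t) - fc t + γ)
    (hdfc : ∀ t, HasDerivAt fc 0 t) :
    ∀ t, vH t = BH⁻¹ *ᵥ γ ∧ vR t = BH⁻¹ *ᵥ γ ∧ fc t = γ := by
  intro t
  -- notation
  set d : ℝ → Fin 3 → ℝ := fun t => pR t - pH t with hd
  set s : ℝ → ℝ := fun t => Real.sqrt (d t ⬝ᵥ d t) with hs
  have hspos : ∀ u, 0 < s u := fun u => lt_trans hL (htaut u)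
  have hsL : ∀ u, 0 < s u - L := fun u => sub_pos.mpr (htaut u)
  -- fc is constant
  have hfc_const : ∀ u, fc u = fc 0 := fun u => const_of_deriv_zero' hdfc u
  -- d ⬝ᵥ d = s^2
  have hdd : ∀ u, d u ⬝ᵥ d u = s u * s u := by
    intro u
    have h0 : 0 ≤ d u ⬝ᵥ d u := Finset.sum_nonneg fun i _ => mul_self_nonneg _
    simp only [hs]
    exact (Real.mul_self_sqrt h0).symm
  -- ‖fc‖² = k²(s-L)²
  have hfcsq : ∀ u, fc u ⬝ᵥ fc u = (k * (s u - L)) * (k * (s u - L)) := by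
    intro u
    rw [hfc u]
    have hsne : s u ≠ 0 := ne_of_gt (hspos u)
    rw [smul_dotProduct, dotProduct_smul, smul_eq_mul, smul_eq_mul, hdd u]
    field_simp
    simp only [Real.sqrt_sq (hspos u).le]
  -- s is constant
  have hs_const : ∀ u, s u = s 0 := by
    intro u
    have h1 : (k * (s u - L)) * (k * (s u - L)) = (k * (s 0 - L)) * (k * (s 0 - L)) := by
      rw [← hfcsq u, ← hfcsq 0, hfc_const u]
    have h2 : k * (s u - L) = k * (s 0 - L) := by
      nlinarith [mul_pos hk (hsL u), mul_pos hk (hsL 0)]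
    have := mul_left_cancel₀ (ne_of_gt hk) h2
    linarith
  -- d is constant
  have hcoef : ∀ u, (k * (s u - L) / s u) ≠ 0 :=
    fun u => ne_of_gt (div_pos (mul_pos hk (hsL u)) (hspos u))
  have hd_const : ∀ u, d u = d 0 := by
    intro u
    have h1 : d u = (k * (s u - L) / s u)⁻¹ • fc u := by
      rw [hfc u, smul_smul, inv_mul_cancel₀ (hcoef u), one_smul]
    have h2 : d 0 = (k * (s 0 - L) / s 0)⁻¹ • fc 0 := by
      rw [hfc 0, smul_smul, inv_mul_cancel₀ (hcoef 0), one_smul]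
    rw [h1, h2, hfc_const u, hs_const u]
  -- derivative of d is vR - vH, but d is constant, so vR = vH
  have hveq : ∀ u, vH u = vR u := by
    intro u
    have h1 : HasDerivAt d (vR u - vH u) u := (hpR u).sub (hpH u)
    have h2 : HasDerivAt d 0 u := by
      have : d = fun _ => d 0 := funext hd_const
      rw [this]
      exact hasDerivAt_const u (d 0)
    have := h1.unique h2
    have := sub_eq_zero.mp this
    exact this.symm
  -- fc = γ
  have hfcγ : fc t = γ := by
    have h := hbalR t
    rw [hveq t, sub_self, Matrix.mulVec_zero, zero_sub] at h
    have : fc t = γ := by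
      have := congrArg (fun x => x + fc t) h
      simpa [add_comm, add_assoc] using this
    exact this
  -- BH vH = fc = γ
  have hBHv : BH *ᵥ vH t = γ := by
    have h := hbalH t
    rw [hfcγ] at h
    exact neg_add_eq_zero.mp h.symm
  have hdet : IsUnit BH.det := isUnit_iff_ne_zero.mpr (ne_of_gt hBH.det_pos)
  have hvH : vH t = BH⁻¹ *ᵥ γ := by
    rw [← hBHv, Matrix.mulVec_mulVec, Matrix.nonsing_inv_mul _ hdet, Matrix.one_mulVec]
  exact ⟨hvH, (hveq t) ▸ hvH, hfcγ⟩
end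

section
/- Consider the output-strict passivity inequality: for the coupled system with storage function V (kinetic energies plus cable elastic potential plus position-error energy), inputs (u_H, δ) and outputs (ṗ_H, ṗ_R), one has V̇ ≤ -y^T B y + y^T u where y = (ṗ_H, ṗ_R), u = (u_H, δ), and B = [[B_H, -½B_A],[-½B_A, B_A]]. In particular, if B_H - ¼B_A ≻ 0, the system is output-strictly passive. -/
open Matrix

lemma dot_deriv {f g : ℝ → Fin 3 → ℝ} {f' g' : Fin 3 → ℝ} {t : ℝ}
    (hf : HasDerivAt f f' t) (hg : HasDerivAt g g' t) :
    HasDerivAt (fun s => f s ⬝ᵥ g s) (f' ⬝ᵥ g t + f t ⬝ᵥ g') t := by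
  rw [hasDerivAt_pi] at hf hg
  have := HasDerivAt.fun_sum (fun i (_ : i ∈ Finset.univ) => (hf i).mul (hg i))
  simp only [dotProduct]
  refine this.congr_deriv ?_
  rw [Finset.sum_add_distrib]

lemma mulVec_deriv {A : Matrix (Fin 3) (Fin 3) ℝ} {f : ℝ → Fin 3 → ℝ} {f' : Fin 3 → ℝ} {t : ℝ}
    (hf : HasDerivAt f f' t) :
    HasDerivAt (fun s => A *ᵥ f s) (A *ᵥ f') t := by
  rw [hasDerivAt_pi] at hf ⊢
  intro i
  simpa [mulVec, dotProduct] using HasDerivAt.fun_sum (fun j (_ : j ∈ Finset.univ) => ((hf j).const_mul (A i j)))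

lemma symm_dot {A : Matrix (Fin 3) (Fin 3) ℝ} (hA : A.IsSymm) (x y : Fin 3 → ℝ) :
    x ⬝ᵥ A *ᵥ y = y ⬝ᵥ A *ᵥ x := by
  rw [dotProduct_mulVec, ← mulVec_transpose, hA.eq, dotProduct_comm]

/-- Output-strict passivity: along the coupled dynamics
`m_H v̇_H = -B_H v_H + f_c + u_H` (planar, so `v_Hᵀγ_ref = 0`) and
`M_A v̇_R = B_A(v_H - v_R) - f_c + K e_R + γ_ref + δ` with `ė_R = -v_R`, the
storage function `V = ½m_H‖v_H‖² + ½v_RᵀM_A v_R + ½e_RᵀK e_R + E` (where `E` is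
the elastic potential minus `lᵀγ_ref`, with `Ė = (v_R - v_H)ᵀ(f_c - γ_ref)`)
satisfies `V̇ = -yᵀB y + yᵀu` where `y = (v_H, v_R)`, `u = (u_H, δ)` and
`B = [[B_H, -½B_A],[-½B_A, B_A]]`; in particular, if `B_H - ¼B_A ≻ 0` then
`V̇ ≤ yᵀu`, i.e. the system is output-strictly passive. -/
theorem stmt18 (mH : ℝ) (hmH : 0 < mH)
    (MA BH BA K : Matrix (Fin 3) (Fin 3) ℝ)
    (hMAs : MA.IsSymm) (hBHs : BH.IsSymm) (hBAs : BA.IsSymm) (hKs : K.IsSymm)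
    (hMA : MA.PosDef) (hBH : BH.PosDef) (hBA : BA.PosDef)
    (vH vR eR fc : ℝ → Fin 3 → ℝ) (uH δ γref : Fin 3 → ℝ) (E : ℝ → ℝ) (t : ℝ)
    (hplanar : vH t ⬝ᵥ γref = 0)
    (hvH : HasDerivAt vH (mH⁻¹ • (-(BH *ᵥ vH t) + fc t + uH)) t)
    (hvR : HasDerivAt vR
      (MA⁻¹ *ᵥ (BA *ᵥ (vH t - vR t) - fc t + K *ᵥ eR t + γref + δ)) t)
    (heR : HasDerivAt eR (-(vR t)) t)
    (hE : HasDerivAt E ((vR t - vH t) ⬝ᵥ (fc t - γref)) t) :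
    HasDerivAt
      (fun s => mH / 2 * (vH s ⬝ᵥ vH s) + 1 / 2 * (vR s ⬝ᵥ (MA *ᵥ vR s))
        + 1 / 2 * (eR s ⬝ᵥ (K *ᵥ eR s)) + E s)
      (-(vH t ⬝ᵥ (BH *ᵥ vH t)) + vR t ⬝ᵥ (BA *ᵥ vH t) - vR t ⬝ᵥ (BA *ᵥ vR t)
        + vH t ⬝ᵥ uH + vR t ⬝ᵥ δ) t ∧
    ((BH - (1/4 : ℝ) • BA).PosDef →
      -(vH t ⬝ᵥ (BH *ᵥ vH t)) + vR t ⬝ᵥ (BA *ᵥ vH t) - vR t ⬝ᵥ (BA *ᵥ vR t)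
        + vH t ⬝ᵥ uH + vR t ⬝ᵥ δ ≤ vH t ⬝ᵥ uH + vR t ⬝ᵥ δ) := by
  constructor
  · have h1 := (dot_deriv hvH hvH).const_mul (mH / 2)
    have h2 := (dot_deriv hvR (mulVec_deriv (A := MA) hvR)).const_mul ((1:ℝ) / 2)
    have h3 := (dot_deriv heR (mulVec_deriv (A := K) heR)).const_mul ((1:ℝ) / 2)
    have htot := ((h1.add h2).add h3).add hE
    refine htot.congr_deriv ?_
    set X := -(BH *ᵥ vH t) + fc t + uH with hX
    set Y := BA *ᵥ (vH t - vR t) - fc t + K *ᵥ eR t + γref + δ with hY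
    have hMAc : MA *ᵥ (MA⁻¹ *ᵥ Y) = Y := by
      rw [mulVec_mulVec, Matrix.mul_nonsing_inv _ (isUnit_iff_ne_zero.mpr hMA.det_pos.ne'), one_mulVec]
    rw [symm_dot hMAs (MA⁻¹ *ᵥ Y) (vR t)]
    rw [show MA *ᵥ (MA⁻¹ *ᵥ Y) = Y from hMAc]
    rw [dotProduct_comm (mH⁻¹ • X) (vH t)]
    rw [symm_dot hKs (-(vR t)) (eR t)]
    simp only [hX, hY, dotProduct_smul, smul_eq_mul, dotProduct_add, dotProduct_sub,
      dotProduct_neg, neg_dotProduct, sub_dotProduct, add_dotProduct, mulVec_neg, Matrix.mulVec_sub]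
    rw [symm_dot hKs (eR t) (vR t), hplanar]
    field_simp
    ring
  · intro hP
    have A1 := hP.posSemidef.dotProduct_mulVec_nonneg (vH t)
    have A2 := hBA.posSemidef.dotProduct_mulVec_nonneg (vR t - (1/2 : ℝ) • vH t)
    have hsym := symm_dot hBAs (vH t) (vR t)
    simp only [star_trivial, RCLike.re_to_real, Matrix.sub_mulVec, Matrix.smul_mulVec,
      Matrix.mulVec_sub, Matrix.mulVec_smul, dotProduct_sub, sub_dotProduct, dotProduct_smul, smul_dotProduct, smul_eq_mul] at A1 A2
    linarith
end
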